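/- Let X be a finite set, Z a finite set, p a probability distribution on X, and for each x ∈ X let p(·|x) be a conditional distribution on Z. Let p(z) = Σ_x p(x) p(z|x) be the induced marginal. Then for any product distribution h on Z = Z_1 × ⋯ × Z_d, D_KL(p(Z) ‖ ∏_i p(Z_i)) ≤ Σ_x p(x) D_KL(p(·|x) ‖ h), where p(Z_i) are the marginals of p(z). In words: the total correlation of the latent variables is upper bounded by the expected KL divergence between the encoder distribution and any product prior. -/

import Mathlib

open scoped BigOperators Classical

/-- Kullback–Leibler divergence between two distributions (given as real-valued
functions) on a finite set, with the conventions `0 log 0 = 0` and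
`D_KL(p‖q) = ∞` if `p` is not absolutely continuous w.r.t. `q`. -/
noncomputable def klDiv {Z : Type*} [Fintype Z] (p q : Z → ℝ) : EReal :=
  if ∀ z, q z = 0 → p z = 0 then
    ((∑ z, if p z = 0 then 0 else p z * Real.log (p z / q z) : ℝ) : EReal)
  else ⊤

/-- The `i`-th marginal of a distribution on a finite product space. -/
noncomputable def marginal {d : ℕ} {Z : Fin d → Type*} [∀ i, Fintype (Z i)]
    (p : (∀ i, Z i) → ℝ) (i : Fin d) (a : Z i) : ℝ :=
  ∑ z : ∀ j, Z j, if z i = a then p z else 0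

open Finset Real

lemma ereal_coe_sum' {ι : Type*} (s : Finset ι) (f : ι → ℝ) :
    ((∑ i ∈ s, f i : ℝ) : EReal) = ∑ i ∈ s, ((f i : ℝ) : EReal) :=
  map_sum (⟨⟨Real.toEReal, EReal.coe_zero⟩, fun a b => EReal.coe_add a b⟩ : ℝ →+ EReal) f s

/-- The log-sum inequality. -/
lemma log_sum_ineq {ι : Type*} (s : Finset ι) (a b : ι → ℝ)
    (ha : ∀ i ∈ s, 0 ≤ a i) (hb : ∀ i ∈ s, 0 ≤ b i)
    (hab : ∀ i ∈ s, b i = 0 → a i = 0) :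
    (∑ i ∈ s, a i) * Real.log ((∑ i ∈ s, a i) / (∑ i ∈ s, b i)) ≤
      ∑ i ∈ s, a i * Real.log (a i / b i) := by
  set A := ∑ i ∈ s, a i with hA
  set B := ∑ i ∈ s, b i with hB
  by_cases hA0 : A = 0
  · have h0 : ∀ i ∈ s, a i = 0 := (Finset.sum_eq_zero_iff_of_nonneg ha).1 hA0
    rw [hA0, zero_mul]
    apply Finset.sum_nonneg
    intro i hi
    rw [h0 i hi, zero_mul]
  · have hApos : 0 < A := lt_of_le_of_ne (Finset.sum_nonneg ha) (Ne.symm hA0)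
    obtain ⟨i0, hi0, hai0⟩ : ∃ i ∈ s, a i ≠ 0 := by
      by_contra hcon
      push_neg at hcon
      exact hA0 (Finset.sum_eq_zero hcon)
    have hbi0 : 0 < b i0 := lt_of_le_of_ne (hb i0 hi0) (fun e => hai0 (hab i0 hi0 e.symm))
    have hBpos : 0 < B := lt_of_lt_of_le hbi0
      (Finset.single_le_sum (fun i hi => hb i hi) hi0)
    have key : ∀ i ∈ s, a i * Real.log (A / B) + (a i - (A / B) * b i) ≤
        a i * Real.log (a i / b i) := by
      intro i hi
      by_cases hai : a i = 0
      · have : 0 ≤ A / B * b i := mul_nonneg (div_nonneg hApos.le hBpos.le) (hb i hi)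
        simp only [hai, zero_mul, zero_add, zero_sub]
        linarith
      · have hai' : 0 < a i := lt_of_le_of_ne (ha i hi) (Ne.symm hai)
        have hbi : 0 < b i := lt_of_le_of_ne (hb i hi) (fun e => hai (hab i hi e.symm))
        have ht : 0 < (a i / b i) / (A / B) := by positivity
        have h1 : 1 - ((a i / b i) / (A / B))⁻¹ ≤ Real.log ((a i / b i) / (A / B)) :=
          Real.one_sub_inv_le_log_of_pos ht
        have hinv : ((a i / b i) / (A / B))⁻¹ = (A / B) * (b i / a i) := by
          field_simp
        have h2 : Real.log ((a i / b i) / (A / B)) =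
            Real.log (a i / b i) - Real.log (A / B) :=
          Real.log_div (by positivity) (by positivity)
        rw [hinv, h2] at h1
        have h4 := mul_le_mul_of_nonneg_left h1 hai'.le
        have e1 : a i * (1 - A / B * (b i / a i)) = a i - (A / B) * b i := by
          field_simp
        rw [e1, mul_sub] at h4
        linarith
    calc A * Real.log (A / B)
        = ∑ i ∈ s, (a i * Real.log (A / B) + (a i - (A / B) * b i)) := by
          rw [Finset.sum_add_distrib, Finset.sum_sub_distrib, ← Finset.sum_mul,
            ← Finset.mul_sum, ← hA, ← hB, div_mul_cancel₀ A (ne_of_gt hBpos)]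
          ring
      _ ≤ ∑ i ∈ s, a i * Real.log (a i / b i) := Finset.sum_le_sum key

lemma klsum_eq {Z : Type*} [Fintype Z] (p q : Z → ℝ) :
    (∑ z, if p z = 0 then 0 else p z * Real.log (p z / q z)) =
      ∑ z, p z * Real.log (p z / q z) := by
  apply Finset.sum_congr rfl
  intro z _
  by_cases h : p z = 0 <;> simp [h]

lemma klDiv_nonneg {Z : Type*} [Fintype Z] (p q : Z → ℝ)
    (hp : ∀ z, 0 ≤ p z) (hq : ∀ z, 0 ≤ q z)
    (hp1 : ∑ z, p z = 1) (hq1 : ∑ z, q z ≤ 1) : 0 ≤ klDiv p q := by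
  unfold klDiv
  split_ifs with hac
  · rw [klsum_eq]
    have hBpos : 0 < ∑ z, q z := by
      rcases lt_or_eq_of_le (Finset.sum_nonneg (fun z _ => hq z)) with h | h
      · exact h
      · exfalso
        have h0 : ∀ z ∈ (Finset.univ : Finset Z), q z = 0 :=
          (Finset.sum_eq_zero_iff_of_nonneg (fun z _ => hq z)).1 h.symm
        have : (1 : ℝ) = 0 := by
          rw [← hp1]
          exact Finset.sum_eq_zero (fun z hz => hac z (h0 z hz))
        norm_num at this
    have hls := log_sum_ineq Finset.univ p q (fun z _ => hp z) (fun z _ => hq z)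
      (fun z _ => hac z)
    rw [hp1, one_mul] at hls
    have hlog : 0 ≤ Real.log (1 / ∑ z, q z) := by
      apply Real.log_nonneg
      rw [le_div_iff₀ hBpos, one_mul]
      exact hq1
    have : (0 : ℝ) ≤ ∑ z, p z * Real.log (p z / q z) := le_trans hlog hls
    exact_mod_cast this
  · exact le_top

/-- Convexity of KL in the first argument (mixture bound). -/
lemma klDiv_mixture_le {X : Type*} [Fintype X] {Z : Type*} [Fintype Z]
    (p : X → ℝ) (hp0 : ∀ x, 0 ≤ p x) (hp1 : ∑ x, p x = 1)
    (cond : X → Z → ℝ) (hc0 : ∀ x z, 0 ≤ cond x z) (hc1 : ∀ x, ∑ z, cond x z = 1)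
    (q : Z → ℝ) (hq0 : ∀ z, 0 ≤ q z) (hq1 : ∑ z, q z = 1)
    (pz : Z → ℝ) (hpz : ∀ z, pz z = ∑ x, p x * cond x z) :
    klDiv pz q ≤ ∑ x, ((p x : EReal) * klDiv (cond x) q) := by
  by_cases hAC : ∀ x, p x ≠ 0 → ∀ z, q z = 0 → cond x z = 0
  · have hpzAC : ∀ z, q z = 0 → pz z = 0 := by
      intro z hz
      rw [hpz]
      apply Finset.sum_eq_zero
      intro x _
      by_cases hx : p x = 0
      · simp [hx]
      · simp [hAC x hx z hz]
    set D : X → ℝ := fun x => ∑ z, cond x z * Real.log (cond x z / q z) with hD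
    have hterm : ∀ x ∈ (Finset.univ : Finset X),
        (p x : EReal) * klDiv (cond x) q = ((p x * D x : ℝ) : EReal) := by
      intro x _
      by_cases hx : p x = 0
      · simp [hx]
      · have hk : klDiv (cond x) q = ((D x : ℝ) : EReal) := by
          unfold klDiv
          rw [if_pos (hAC x hx)]
          exact congrArg _ (klsum_eq (cond x) q)
        rw [hk, ← EReal.coe_mul]
    rw [Finset.sum_congr rfl hterm, ← ereal_coe_sum']
    unfold klDiv
    rw [if_pos hpzAC]
    rw [klsum_eq]
    have hreal : ∑ z, pz z * Real.log (pz z / q z) ≤ ∑ x, p x * D x := by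
      have swap : ∑ x, p x * D x =
          ∑ z, ∑ x, (p x * cond x z) * Real.log (cond x z / q z) := by
        simp_rw [hD, Finset.mul_sum]
        rw [Finset.sum_comm]
        apply Finset.sum_congr rfl
        intro z _
        apply Finset.sum_congr rfl
        intro x _
        ring
      rw [swap]
      apply Finset.sum_le_sum
      intro z _
      have hsb : ∑ x, p x * q z = q z := by
        rw [← Finset.sum_mul, hp1, one_mul]
      have key := log_sum_ineq Finset.univ (fun x => p x * cond x z)
        (fun x => p x * q z)
        (fun x _ => mul_nonneg (hp0 x) (hc0 x z))
        (fun x _ => mul_nonneg (hp0 x) (hq0 z))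
        (by
          intro x _ hbx
          show p x * cond x z = 0
          have hbx' : p x * q z = 0 := hbx
          rcases mul_eq_zero.1 hbx' with h | h
          · rw [h, zero_mul]
          · by_cases hx : p x = 0
            · rw [hx, zero_mul]
            · rw [hAC x hx z h, mul_zero])
      simp only [← hpz z, hsb] at key
      refine le_trans key (le_of_eq ?_)
      apply Finset.sum_congr rfl
      intro x _
      by_cases hx : p x = 0
      · simp [hx]
      · rw [mul_div_mul_left _ _ hx]
    exact_mod_cast hreal
  · push_neg at hAC
    obtain ⟨x0, hx0, z0, hz0, hcz0⟩ := hAC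
    have hx0' : 0 < p x0 := lt_of_le_of_ne (hp0 x0) (Ne.symm hx0)
    have htop : (p x0 : EReal) * klDiv (cond x0) q = ⊤ := by
      have hk : klDiv (cond x0) q = ⊤ := by
        unfold klDiv
        rw [if_neg]
        push_neg
        exact ⟨z0, hz0, hcz0⟩
      rw [hk]
      exact EReal.coe_mul_top_of_pos hx0'
    have htople : (⊤ : EReal) ≤ ∑ x, ((p x : EReal) * klDiv (cond x) q) := by
      rw [← htop]
      apply Finset.single_le_sum (f := fun x => (p x : EReal) * klDiv (cond x) q)
        ?_ (Finset.mem_univ x0)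
      intro i _
      exact mul_nonneg (by exact_mod_cast hp0 i)
        (klDiv_nonneg _ _ (hc0 i) hq0 (hc1 i) hq1.le)
    exact le_trans le_top htople

/-- The product of marginals minimizes KL among product distributions. -/
lemma klDiv_marginal_le {d : ℕ} {Z : Fin d → Type*} [∀ i, Fintype (Z i)]
    (pz : (∀ i, Z i) → ℝ) (h0 : ∀ z, 0 ≤ pz z) (h1 : ∑ z, pz z = 1)
    (h : ∀ i, Z i → ℝ) (hh0 : ∀ i a, 0 ≤ h i a) (hh1 : ∀ i, ∑ a, h i a = 1) :
    klDiv pz (fun z => ∏ i, marginal pz i (z i)) ≤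
      klDiv pz (fun z => ∏ i, h i (z i)) := by
  have m0 : ∀ (i : Fin d) (a : Z i), 0 ≤ marginal pz i a := by
    intro i a
    apply Finset.sum_nonneg
    intro z _
    split
    · exact h0 z
    · exact le_rfl
  have mge : ∀ (i : Fin d) (z : ∀ j, Z j), pz z ≤ marginal pz i (z i) := by
    intro i z
    have hs := Finset.single_le_sum (f := fun w => if w i = z i then pz w else 0)
      (fun w _ => by split <;> [exact h0 w; exact le_rfl]) (Finset.mem_univ z)
    simpa [marginal] using hs
  have msum : ∀ i : Fin d, ∑ a, marginal pz i a = 1 := by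
    intro i
    unfold marginal
    rw [Finset.sum_comm]
    simp only [Finset.sum_ite_eq, Finset.mem_univ, if_true]
    exact h1
  have mprodAC : ∀ z, (∏ i, marginal pz i (z i)) = 0 → pz z = 0 := by
    intro z hz
    obtain ⟨i, _, hi⟩ := Finset.prod_eq_zero_iff.1 hz
    exact le_antisymm (le_of_le_of_eq (mge i z) hi) (h0 z)
  by_cases hAC : ∀ z, (∏ i, h i (z i)) = 0 → pz z = 0
  · unfold klDiv
    rw [if_pos hAC, if_pos mprodAC, klsum_eq, klsum_eq]
    have hreal : ∑ z, pz z * Real.log (pz z / ∏ i, marginal pz i (z i)) ≤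
        ∑ z, pz z * Real.log (pz z / ∏ i, h i (z i)) := by
      rw [← sub_nonneg, ← Finset.sum_sub_distrib]
      have step1 : ∀ z ∈ (Finset.univ : Finset (∀ i, Z i)),
          pz z * Real.log (pz z / ∏ i, h i (z i)) -
            pz z * Real.log (pz z / ∏ i, marginal pz i (z i)) =
          ∑ i, pz z * (Real.log (marginal pz i (z i)) - Real.log (h i (z i))) := by
        intro z _
        by_cases hz : pz z = 0
        · simp [hz]
        · have hm : ∀ i : Fin d, marginal pz i (z i) ≠ 0 :=
            fun i e => hz (le_antisymm (le_of_le_of_eq (mge i z) e) (h0 z))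
          have hhp : (∏ i, h i (z i)) ≠ 0 := fun e => hz (hAC z e)
          have hh : ∀ i : Fin d, h i (z i) ≠ 0 := by
            intro i hi
            exact hhp (Finset.prod_eq_zero (Finset.mem_univ i) hi)
          have hmp : (∏ i, marginal pz i (z i)) ≠ 0 :=
            Finset.prod_ne_zero_iff.2 (fun i _ => hm i)
          rw [Real.log_div hz hhp, Real.log_div hz hmp,
            Real.log_prod (fun i _ => hm i), Real.log_prod (fun i _ => hh i),
            ← Finset.mul_sum, Finset.sum_sub_distrib]
          ring
      rw [Finset.sum_congr rfl step1, Finset.sum_comm]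
      apply Finset.sum_nonneg
      intro i _
      have regroup : ∑ z, pz z * (Real.log (marginal pz i (z i)) - Real.log (h i (z i))) =
          ∑ a, marginal pz i a *
            (Real.log (marginal pz i a) - Real.log (h i a)) := by
        calc ∑ z, pz z * (Real.log (marginal pz i (z i)) - Real.log (h i (z i)))
            = ∑ z, ∑ a, (if z i = a then
                pz z * (Real.log (marginal pz i a) - Real.log (h i a)) else 0) := by
              apply Finset.sum_congr rfl
              intro z _
              rw [Finset.sum_ite_eq]
              simp
          _ = ∑ a, ∑ z, (if z i = a then
                pz z * (Real.log (marginal pz i a) - Real.log (h i a)) else 0) :=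
              Finset.sum_comm
          _ = ∑ a, marginal pz i a *
                (Real.log (marginal pz i a) - Real.log (h i a)) := by
              apply Finset.sum_congr rfl
              intro a _
              rw [show marginal pz i a = ∑ z : ∀ j, Z j, if z i = a then pz z else 0
                from rfl, Finset.sum_mul]
              apply Finset.sum_congr rfl
              intro z _
              split <;> simp
      rw [regroup]
      have hsupp2 : ∀ a : Z i, h i a = 0 → marginal pz i a = 0 := by
        intro a ha
        unfold marginal
        apply Finset.sum_eq_zero
        intro z _
        split_ifs with he
        · apply hAC
          apply Finset.prod_eq_zero (Finset.mem_univ i)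
          rw [he, ha]
        · rfl
      have eqlog : ∑ a, marginal pz i a *
            (Real.log (marginal pz i a) - Real.log (h i a)) =
          ∑ a, marginal pz i a * Real.log (marginal pz i a / h i a) := by
        apply Finset.sum_congr rfl
        intro a _
        by_cases hma : marginal pz i a = 0
        · simp [hma]
        · have hha : h i a ≠ 0 := fun e => hma (hsupp2 a e)
          rw [Real.log_div hma hha]
      rw [eqlog]
      have hls := log_sum_ineq Finset.univ (marginal pz i) (h i)
        (fun a _ => m0 i a) (fun a _ => hh0 i a) (fun a _ => hsupp2 a)
      rw [msum i, hh1 i] at hls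
      simpa using hls
    exact_mod_cast hreal
  · unfold klDiv
    rw [if_neg hAC]
    exact le_top

/-- The total correlation of the induced latent distribution is upper bounded
by the expected KL divergence between the encoder distribution and any product
prior: `D_KL(p(Z) ‖ ∏ᵢ p(Zᵢ)) ≤ Σₓ p(x) D_KL(p(·|x) ‖ h)`. -/
theorem total_correlation_le_expected_klDiv
    {X : Type*} [Fintype X] {d : ℕ} {Z : Fin d → Type*} [∀ i, Fintype (Z i)]
    (p : X → ℝ) (hp0 : ∀ x, 0 ≤ p x) (hp1 : ∑ x, p x = 1)
    (cond : X → (∀ i, Z i) → ℝ)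
    (hc0 : ∀ x z, 0 ≤ cond x z) (hc1 : ∀ x, ∑ z, cond x z = 1)
    (h : ∀ i, Z i → ℝ) (hh0 : ∀ i a, 0 ≤ h i a) (hh1 : ∀ i, ∑ a, h i a = 1)
    (pz : (∀ i, Z i) → ℝ) (hpz : ∀ z, pz z = ∑ x, p x * cond x z) :
    klDiv pz (fun z => ∏ i, marginal pz i (z i)) ≤
      ∑ x, ((p x : EReal) * klDiv (cond x) (fun z => ∏ i, h i (z i))) := by
  have hpz0 : ∀ z, 0 ≤ pz z := fun z => (hpz z) ▸
    Finset.sum_nonneg (fun x _ => mul_nonneg (hp0 x) (hc0 x z))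
  have hpz1 : ∑ z, pz z = 1 := by
    simp_rw [hpz]
    rw [Finset.sum_comm]
    simp_rw [← Finset.mul_sum, hc1, mul_one]
    exact hp1
  have hq1 : ∑ z : (∀ i, Z i), ∏ i, h i (z i) = 1 := by
    have hps := Finset.prod_univ_sum (fun i : Fin d => (Finset.univ : Finset (Z i)))
      (fun i a => h i a)
    rw [Fintype.piFinset_univ] at hps
    rw [← hps]
    simp [hh1]
  exact le_trans (klDiv_marginal_le pz hpz0 hpz1 h hh0 hh1)
    (klDiv_mixture_le p hp0 hp1 cond hc0 hc1 _
      (fun z => Finset.prod_nonneg (fun i _ => hh0 i (z i))) hq1 pz hpz)
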